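/- arXiv:2604.27391 — 5 statements merged into one kernel-verified Lean document; each statement's English description precedes it below -/
import Mathlib

section
/- Let G be a group and ρ an absolutely irreducible finite-dimensional representation of G over a finite field F of characteristic p, such that ρ cannot be realized over any proper subfield of F. Then the underlying F_p-vector space of ρ has no G-invariant F_p-subspaces other than 0 and the whole space. -/
set_option synthInstance.maxHeartbeats 1000000
set_option maxHeartbeats 12000000

namespace Stmt0Aux

/-- Jacobson density theorem, finite semisimple version: an additive endomorphism of a finite
semisimple module commuting with all `R`-linear endomorphisms is given by the action of some
element of `R`. -/
theorem density_aux {R M : Type*} [Ring R] [AddCommGroup M] [Module R M] [Finite M]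
    [IsSemisimpleModule R M] (φ : M → M)
    (hadd : ∀ x y, φ (x + y) = φ x + φ y)
    (hc : ∀ ψ : Module.End R M, ∀ x, φ (ψ x) = ψ (φ x)) :
    ∃ r : R, ∀ x, φ x = r • x := by
  classical
  cases nonempty_fintype M
  let φ' : M →+ M := AddMonoidHom.mk' φ hadd
  -- the Pi module M → M is semisimple
  have hss : IsSemisimpleModule R (M → M) :=
    isSemisimpleModule_of_isSemisimpleModule_submodule'
      (p := fun i => LinearMap.range (LinearMap.single R (fun _ : M => M) i))
      (fun i => IsSemisimpleModule.range _)
      (LinearMap.iSup_range_single R _)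
  let w : M → M := id
  let N : Submodule R (M → M) := Submodule.span R {w}
  obtain ⟨N', hN'⟩ := exists_isCompl N
  let P : Module.End R (M → M) := N.subtype.comp (Submodule.linearProjOfIsCompl N N' hN')
  have hPmem : ∀ x, P x ∈ N := fun x => (Submodule.linearProjOfIsCompl N N' hN' x).2
  have hPfix : ∀ x ∈ N, P x = x := fun x hx => by
    show (Submodule.projectionOnto N N' hN' x : M → M) = x
    rw [Submodule.projectionOnto_apply_left hN' ⟨x, hx⟩]
  -- matrix components of P
  let e : M → M → Module.End R M := fun i j =>
    (LinearMap.proj i).comp (P.comp (LinearMap.single R (fun _ : M => M) j))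
  have hPdec : ∀ (x : M → M) (i : M), P x i = ∑ j, e i j (x j) := by
    intro x i
    conv_lhs => rw [← Finset.univ_sum_single x]
    rw [map_sum]
    simp [e]
  -- φ applied componentwise
  let φm : (M → M) → (M → M) := fun x i => φ (x i)
  have hcomm : ∀ x, φm (P x) = P (φm x) := by
    intro x
    funext i
    show φ (P x i) = P (φm x) i
    rw [hPdec, hPdec]
    rw [show φ (∑ j, e i j (x j)) = ∑ j, φ (e i j (x j)) from map_sum φ' _ _]
    exact Finset.sum_congr rfl fun j _ => hc (e i j) (x j)
  have hw : w ∈ N := Submodule.mem_span_singleton_self w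
  have hφw : φm w ∈ N := by
    rw [show φm w = P (φm w) from by rw [← hcomm, hPfix w hw]]
    exact hPmem _
  obtain ⟨r, hr⟩ := Submodule.mem_span_singleton.1 hφw
  refine ⟨r, fun x => ?_⟩
  have := congrFun hr x
  simpa [φm, w] using this.symm

section Setup

variable (p : ℕ) [Fact p.Prime] {F : Type*} [Field F] [Fintype F] [CharP F p]
    [Algebra (ZMod p) F] {G : Type*} [Group G] {n : ℕ}

/-- The `𝔽_p`-subalgebra of matrices generated by the image of `ρ`. -/
def Amat (ρ : G →* GL (Fin n) F) : Subalgebra (ZMod p) (Matrix (Fin n) (Fin n) F) :=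
  Algebra.adjoin (ZMod p) (Set.range fun g => (ρ g : Matrix (Fin n) (Fin n) F))

lemma rho_mem_Amat (ρ : G →* GL (Fin n) F) (g : G) :
    (ρ g : Matrix (Fin n) (Fin n) F) ∈ Amat p ρ :=
  Algebra.subset_adjoin ⟨g, rfl⟩

variable (F) in
/-- Matrices act on column vectors, as `𝔽_p`-linear maps. -/
def matEnd : Matrix (Fin n) (Fin n) F →+* Module.End (ZMod p) (Fin n → F) where
  toFun m :=
    { toFun := m.mulVec
      map_add' := fun x y => Matrix.mulVec_add m x y
      map_smul' := fun c x => Matrix.mulVec_smul m c x }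
  map_one' := LinearMap.ext fun v => Matrix.one_mulVec v
  map_mul' := fun m₁ m₂ => LinearMap.ext fun v => (Matrix.mulVec_mulVec v m₁ m₂).symm
  map_zero' := LinearMap.ext fun v => Matrix.zero_mulVec v
  map_add' := fun m₁ m₂ => LinearMap.ext fun v => Matrix.add_mulVec m₁ m₂ v

instance amatModule (ρ : G →* GL (Fin n) F) : Module (Amat p ρ) (Fin n → F) :=
  Module.compHom _ ((matEnd p F).comp (Amat p ρ).val.toRingHom)

lemma amat_smul_def (ρ : G →* GL (Fin n) F) (a : Amat p ρ) (v : Fin n → F) :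
    (a • v : Fin n → F) = (a : Matrix (Fin n) (Fin n) F).mulVec v := rfl

lemma algebraMap_amat_smul (ρ : G →* GL (Fin n) F) (r : ZMod p) (v : Fin n → F) :
    ((algebraMap (ZMod p) (Amat p ρ) r) • v : Fin n → F) = r • v := by
  rw [amat_smul_def]
  rw [show ((algebraMap (ZMod p) (Amat p ρ) r : Amat p ρ) : Matrix (Fin n) (Fin n) F)
      = r • (1 : Matrix (Fin n) (Fin n) F) from by
    rw [← Algebra.algebraMap_eq_smul_one]; rfl]
  rw [Matrix.smul_mulVec, Matrix.one_mulVec]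

end Setup

end Stmt0Aux

open Stmt0Aux in
/-- Let `G` be a group and `ρ` an absolutely irreducible finite-dimensional
representation of `G` over a finite field `F` of characteristic `p` (absolute irreducibility is
encoded, as usual over finite fields, by irreducibility together with the commutant consisting of
scalars), such that `ρ` cannot be realized over any proper subfield of `F`.  Then the underlying
`𝔽_p`-vector space of `ρ` has no `G`-invariant `𝔽_p`-subspaces other than `0` and the whole
space. -/
theorem stmt0 {p : ℕ} [Fact p.Prime] {F : Type*} [Field F] [Fintype F] [CharP F p]
    [Algebra (ZMod p) F]
    {G : Type*} [Group G] {n : ℕ} (ρ : G →* GL (Fin n) F)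
    (hirr : ∀ U : Submodule F (Fin n → F),
      (∀ g : G, ∀ x ∈ U, (ρ g : Matrix (Fin n) (Fin n) F).mulVec x ∈ U) → U = ⊥ ∨ U = ⊤)
    (hcomm : ∀ f : Matrix (Fin n) (Fin n) F,
      (∀ g : G, f * (ρ g : Matrix (Fin n) (Fin n) F) = (ρ g : Matrix (Fin n) (Fin n) F) * f) →
      ∃ c : F, f = c • (1 : Matrix (Fin n) (Fin n) F))
    (hmin : ∀ K : Subfield F, K ≠ ⊤ →
      ¬ ∃ M : GL (Fin n) F, ∀ g : G, ∀ i j,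
        ((↑(M⁻¹ * ρ g * M) : Matrix (Fin n) (Fin n) F) i j) ∈ K)
    (W : Submodule (ZMod p) (Fin n → F))
    (hW : ∀ g : G, ∀ x ∈ W, (ρ g : Matrix (Fin n) (Fin n) F).mulVec x ∈ W) :
    W = ⊥ ∨ W = ⊤ := by
  classical
  by_cases hWbot : W = ⊥
  · exact Or.inl hWbot
  right
  -- Find a minimal nonzero invariant subspace `W₀ ≤ W`.
  set S : Set (Submodule (ZMod p) (Fin n → F)) :=
    {U | U ≠ ⊥ ∧ U ≤ W ∧ ∀ g : G, ∀ x ∈ U, (ρ g : Matrix (Fin n) (Fin n) F).mulVec x ∈ U}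
    with hS
  have hWS : W ∈ S := ⟨hWbot, le_rfl, hW⟩
  obtain ⟨W₀, hW₀S, hW₀min'⟩ :=
    (Set.toFinite S).exists_minimal ⟨W, hWS⟩
  obtain ⟨hW₀ne, hW₀le, hW₀inv⟩ := hW₀S
  have hmin₀ : ∀ U ∈ S, U ≤ W₀ → U = W₀ := fun U hU hle => le_antisymm hle (hW₀min' hU hle)
  suffices hQ : W₀ = ⊤ by exact top_le_iff.mp (hQ ▸ hW₀le)
  -- The stabilizer subfield of `W₀`.
  have hKinv : ∀ c : F, c ≠ 0 → (∀ x ∈ W₀, c • x ∈ W₀) → ∀ x ∈ W₀, c⁻¹ • x ∈ W₀ := by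
    intro c hc0 hc x hx
    have hinj : Function.Injective (fun w : W₀ => (⟨c • (w : Fin n → F), hc _ w.2⟩ : W₀)) := by
      intro a b hab
      have h1 : c • (a : Fin n → F) = c • (b : Fin n → F) := congrArg Subtype.val hab
      exact Subtype.ext (smul_right_injective (Fin n → F) hc0 h1)
    obtain ⟨w, hw⟩ := (Finite.injective_iff_surjective.mp hinj) ⟨x, hx⟩
    have h2 : c • (w : Fin n → F) = x := congrArg Subtype.val hw
    have h3 : c⁻¹ • x = (w : Fin n → F) := by rw [← h2, inv_smul_smul₀ hc0]
    rw [h3]; exact w.2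
  let K : Subfield F :=
  { carrier := {c : F | ∀ x ∈ W₀, c • x ∈ W₀}
    zero_mem' := fun x hx => by simpa using W₀.zero_mem
    one_mem' := fun x hx => by simpa using hx
    add_mem' := fun {a b} ha hb x hx => by
      rw [add_smul]; exact W₀.add_mem (ha x hx) (hb x hx)
    neg_mem' := fun {a} ha x hx => by rw [neg_smul]; exact W₀.neg_mem (ha x hx)
    mul_mem' := fun {a b} ha hb x hx => by rw [mul_smul]; exact ha _ (hb x hx)
    inv_mem' := fun a ha => by
      rcases eq_or_ne a 0 with rfl | h0
      · simpa using ha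
      · exact hKinv a h0 ha }
  have memK : ∀ c : F, c ∈ K ↔ ∀ x ∈ W₀, c • x ∈ W₀ := fun c => Iff.rfl
  by_cases hK : K = ⊤
  · -- `W₀` is an `F`-subspace, hence `⊤`.
    let U : Submodule F (Fin n → F) :=
      { carrier := (W₀ : Set (Fin n → F))
        add_mem' := fun {a b} ha hb => W₀.add_mem ha hb
        zero_mem' := W₀.zero_mem
        smul_mem' := fun c x hx => by
          have hcK : c ∈ K := by rw [hK]; exact Subfield.mem_top c
          exact hcK x hx }
    rcases hirr U (fun g x hx => hW₀inv g x hx) with h | h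
    · exact absurd (Submodule.eq_bot_iff W₀ |>.mpr fun x hx =>
        Submodule.mem_bot F |>.mp (h ▸ (hx : x ∈ U))) hW₀ne
    · exact Submodule.eq_top_iff'.mpr fun x => (h ▸ Submodule.mem_top : x ∈ U)
  · -- derive a contradiction with `hmin`
    exfalso
    -- `W₀` is stable under the algebra generated by the image of `ρ`
    have hstab : ∀ m ∈ Amat p ρ, ∀ x ∈ W₀, m.mulVec x ∈ W₀ := by
      intro m hm
      induction hm using Algebra.adjoin_induction with
      | mem m hmem =>
        obtain ⟨g, rfl⟩ := hmem
        exact fun x hx => hW₀inv g x hx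
      | algebraMap r =>
        intro x hx
        rw [show (algebraMap (ZMod p) (Matrix (Fin n) (Fin n) F) r)
            = r • (1 : Matrix (Fin n) (Fin n) F) from by
          rw [← Algebra.algebraMap_eq_smul_one]]
        rw [Matrix.smul_mulVec, Matrix.one_mulVec]
        exact W₀.smul_mem r hx
      | add a b ha hb iha ihb =>
        intro x hx
        rw [Matrix.add_mulVec]
        exact W₀.add_mem (iha x hx) (ihb x hx)
      | mul a b ha hb iha ihb =>
        intro x hx
        rw [← Matrix.mulVec_mulVec]
        exact iha _ (ihb x hx)
    -- `W₀` as a module over the algebra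
    let W₀' : Submodule (Amat p ρ) (Fin n → F) :=
      { carrier := (W₀ : Set (Fin n → F))
        add_mem' := fun {a b} ha hb => W₀.add_mem ha hb
        zero_mem' := W₀.zero_mem
        smul_mem' := fun a x hx => hstab a.1 a.2 x hx }
    have hW₀'ne : W₀' ≠ ⊥ := by
      intro h
      apply hW₀ne
      rw [Submodule.eq_bot_iff] at h ⊢
      exact h
    haveI hsimple : IsSimpleModule (Amat p ρ) W₀' := by
      rw [isSimpleModule_iff_isAtom]
      constructor
      · exact hW₀'ne
      · intro N hN
        by_contra hNbot
        let N' : Submodule (ZMod p) (Fin n → F) :=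
          { carrier := (N : Set (Fin n → F))
            add_mem' := fun {a b} ha hb => N.add_mem ha hb
            zero_mem' := N.zero_mem
            smul_mem' := fun r x hx => by
              have h1 : (algebraMap (ZMod p) (Amat p ρ) r) • x ∈ N := N.smul_mem _ hx
              rwa [algebraMap_amat_smul] at h1 }
        have hN'S : N' ∈ S := by
          refine ⟨?_, ?_, ?_⟩
          · intro h
            apply hNbot
            rw [Submodule.eq_bot_iff] at h ⊢
            exact h
          · intro x hx
            exact hW₀le (hN.le hx)
          · intro g x hx
            have h2 : (⟨(ρ g : Matrix (Fin n) (Fin n) F), rho_mem_Amat p ρ g⟩ : Amat p ρ) • x ∈ N :=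
              N.smul_mem _ hx
            exact h2
        have hle : N' ≤ W₀ := fun x hx => hN.le hx
        have hNW := hmin₀ N' hN'S hle
        have hcoe : (N : Set (Fin n → F)) = (W₀' : Set (Fin n → F)) :=
          congrArg (fun (U : Submodule (ZMod p) (Fin n → F)) => (U : Set (Fin n → F))) hNW
        exact hN.ne (SetLike.ext' hcoe)
    haveI : Finite (Module.End (Amat p ρ) W₀') :=
      Finite.of_injective (fun f => (f : W₀' → W₀')) DFunLike.coe_injective
    letI := Classical.decEq (Module.End (Amat p ρ) W₀')
    letI : DivisionRing (Module.End (Amat p ρ) W₀') := Module.End.instDivisionRing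
    letI : Field (Module.End (Amat p ρ) W₀') := littleWedderburn _
    -- faithfulness of the algebra action on W₀
    have hfaith : ∀ m ∈ Amat p ρ, (∀ x ∈ W₀, m.mulVec x = 0) → m = 0 := by
      intro m hm hann
      let U : Submodule F (Fin n → F) :=
        { carrier := {v | ∀ m' ∈ Amat p ρ, (∀ x ∈ W₀, m'.mulVec x = 0) → m'.mulVec v = 0}
          zero_mem' := fun m' hm' h => Matrix.mulVec_zero m'
          add_mem' := fun {a b} ha hb m' hm' h => by
            rw [Matrix.mulVec_add, ha m' hm' h, hb m' hm' h, add_zero]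
          smul_mem' := fun c v hv m' hm' h => by
            rw [Matrix.mulVec_smul, hv m' hm' h, smul_zero] }
      have hUinv : ∀ g : G, ∀ v ∈ U, (ρ g : Matrix (Fin n) (Fin n) F).mulVec v ∈ U := by
        intro g v hv m' hm' h
        have h2 : m' * (ρ g : Matrix (Fin n) (Fin n) F) ∈ Amat p ρ :=
          mul_mem hm' (rho_mem_Amat p ρ g)
        have h3 : ∀ x ∈ W₀, (m' * (ρ g : Matrix (Fin n) (Fin n) F)).mulVec x = 0 := by
          intro x hx
          rw [← Matrix.mulVec_mulVec]
          exact h _ (hW₀inv g x hx)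
        have h4 := hv _ h2 h3
        rwa [← Matrix.mulVec_mulVec] at h4
      rcases hirr U hUinv with h | h
      · exfalso
        obtain ⟨x, hxW, hx0⟩ := Submodule.ne_bot_iff W₀ |>.mp hW₀ne
        have hxU : x ∈ U := fun m' hm' h' => h' x hxW
        rw [h] at hxU
        exact hx0 (Submodule.mem_bot F |>.mp hxU)
      · have hall : ∀ v, m.mulVec v = 0 := fun v =>
          (h ▸ Submodule.mem_top : v ∈ U) m hm hann
        ext i j
        have h6 := congrFun (hall (Pi.single j 1)) i
        simpa [Matrix.mulVec_single] using h6
    -- every A-endomorphism of W₀ is multiplication by a scalar in K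
    have hEscalar : ∀ φ : Module.End (Amat p ρ) W₀', ∃ c, c ∈ K ∧
        ∀ x : W₀', (φ x : Fin n → F) = c • (x : Fin n → F) := by
      intro φ
      obtain ⟨a, ha⟩ := density_aux (R := Amat p ρ) (M := W₀') (fun x => φ x)
        (fun x y => map_add φ x y)
        (fun ψ x => by
          have hcm : φ * ψ = ψ * φ := mul_comm φ ψ
          exact congrFun (congrArg (fun (f : Module.End (Amat p ρ) W₀') =>
            (f : W₀' → W₀')) hcm) x)
      have hcg : ∀ g : G, (a : Matrix (Fin n) (Fin n) F) * (ρ g : Matrix (Fin n) (Fin n) F)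
          = (ρ g : Matrix (Fin n) (Fin n) F) * (a : Matrix (Fin n) (Fin n) F) := by
        intro g
        set rg : Matrix (Fin n) (Fin n) F := (ρ g : Matrix (Fin n) (Fin n) F) with hrg
        have hdmem : (a : Matrix (Fin n) (Fin n) F) * rg - rg * (a : Matrix (Fin n) (Fin n) F)
            ∈ Amat p ρ :=
          sub_mem (mul_mem a.2 (rho_mem_Amat p ρ g)) (mul_mem (rho_mem_Amat p ρ g) a.2)
        have hdann : ∀ x ∈ W₀,
            ((a : Matrix (Fin n) (Fin n) F) * rg - rg * (a : Matrix (Fin n) (Fin n) F)).mulVec x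
              = 0 := by
          intro x hx
          rw [Matrix.sub_mulVec, ← Matrix.mulVec_mulVec, ← Matrix.mulVec_mulVec]
          have e1 : (a : Matrix (Fin n) (Fin n) F).mulVec (rg.mulVec x)
              = (φ (⟨rg.mulVec x, hW₀inv g x hx⟩ : W₀') : Fin n → F) :=
            (congrArg Subtype.val (ha ⟨rg.mulVec x, hW₀inv g x hx⟩)).symm
          have e2 : (⟨rg.mulVec x, hW₀inv g x hx⟩ : W₀')
              = (⟨rg, rho_mem_Amat p ρ g⟩ : Amat p ρ) • (⟨x, hx⟩ : W₀') := rfl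
          have e3 := φ.map_smul (⟨rg, rho_mem_Amat p ρ g⟩ : Amat p ρ) (⟨x, hx⟩ : W₀')
          have e4 : (φ (⟨rg.mulVec x, hW₀inv g x hx⟩ : W₀') : Fin n → F)
              = rg.mulVec (φ (⟨x, hx⟩ : W₀') : Fin n → F) := by
            rw [e2]
            exact congrArg Subtype.val e3
          have e5 : (φ (⟨x, hx⟩ : W₀') : Fin n → F)
              = (a : Matrix (Fin n) (Fin n) F).mulVec x :=
            congrArg Subtype.val (ha ⟨x, hx⟩)
          rw [e1, e4, e5, sub_self]
        have := hfaith _ hdmem hdann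
        exact sub_eq_zero.mp this
      obtain ⟨c, hc⟩ := hcomm (a : Matrix (Fin n) (Fin n) F) hcg
      have hax : ∀ x : W₀', (φ x : Fin n → F) = c • (x : Fin n → F) := by
        intro x
        have h1 : (φ x : Fin n → F) = (a : Matrix (Fin n) (Fin n) F).mulVec x :=
          congrArg Subtype.val (ha x)
        rw [h1, hc, Matrix.smul_mulVec, Matrix.one_mulVec]
      refine ⟨c, ?_, hax⟩
      intro x hx
      have := (φ (⟨x, hx⟩ : W₀')).2
      rwa [show ((φ (⟨x, hx⟩ : W₀') : Fin n → F)) = c • x from hax ⟨x, hx⟩] at this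
    apply hmin K hK
    -- K-module structure on W₀'
    letI instKmod : Module K W₀' :=
      { smul := fun c x => ⟨(c : F) • (x : Fin n → F), (memK (c : F)).mp c.2 _ x.2⟩
        one_smul := fun x => Subtype.ext (one_smul F (x : Fin n → F))
        mul_smul := fun c d x => Subtype.ext (mul_smul (c : F) (d : F) (x : Fin n → F))
        smul_zero := fun c => Subtype.ext (smul_zero (c : F))
        smul_add := fun c x y => Subtype.ext (smul_add (c : F) (x : Fin n → F) (y : Fin n → F))
        add_smul := fun c d x => Subtype.ext (add_smul (c : F) (d : F) (x : Fin n → F))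
        zero_smul := fun x => Subtype.ext (zero_smul F (x : Fin n → F)) }
    have hKsmul : ∀ (c : K) (x : W₀'), ((c • x : W₀') : Fin n → F) = (c : F) • (x : Fin n → F) :=
      fun c x => rfl
    haveI : Module.Finite K W₀' := Module.finite_iff_finite.mpr inferInstance
    set m := Module.finrank K W₀' with hm
    let b : Module.Basis (Fin m) K W₀' := Module.finBasis K W₀'
    let v : Fin m → (Fin n → F) := fun i => (b i : Fin n → F)
    have hvW : ∀ i, v i ∈ W₀ := fun i => (b i).2
    clear_value b
    clear_value m
    -- decomposition of elements of W₀ in terms of the K-basis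
    have hdecomp : ∀ (x : Fin n → F) (hx : x ∈ W₀),
        x = ∑ l, ((b.repr ⟨x, hx⟩ l : K) : F) • v l := by
      intro x hx
      have hs := b.sum_repr (⟨x, hx⟩ : W₀')
      have hs' := congrArg (Subtype.val) hs
      rw [Submodule.coe_sum] at hs'
      exact hs'.symm
    have hW₀span : ∀ x ∈ W₀, x ∈ Submodule.span F (Set.range v) := by
      intro x hx
      rw [hdecomp x hx]
      exact Submodule.sum_mem _ fun i _ =>
        Submodule.smul_mem _ _ (Submodule.subset_span ⟨i, rfl⟩)
    -- the K-basis of W₀ spans the whole space over F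
    have hspaninv : ∀ g : G, ∀ x ∈ Submodule.span F (Set.range v),
        (ρ g : Matrix (Fin n) (Fin n) F).mulVec x ∈ Submodule.span F (Set.range v) := by
      intro g x hx
      induction hx using Submodule.span_induction with
      | mem y hy =>
        obtain ⟨i, rfl⟩ := hy
        exact hW₀span _ (hW₀inv g _ (hvW i))
      | zero => rw [Matrix.mulVec_zero]; exact Submodule.zero_mem _
      | add y z hy hz ihy ihz => rw [Matrix.mulVec_add]; exact Submodule.add_mem _ ihy ihz
      | smul c y hy ihy => rw [Matrix.mulVec_smul]; exact Submodule.smul_mem _ c ihy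
    have hspan : Submodule.span F (Set.range v) = ⊤ := by
      rcases hirr (Submodule.span F (Set.range v)) hspaninv with h | h
      · exfalso
        obtain ⟨x, hxW, hx0⟩ := Submodule.ne_bot_iff W₀ |>.mp hW₀ne
        have h7 := hW₀span x hxW
        rw [h] at h7
        exact hx0 (Submodule.mem_bot F |>.mp h7)
      · exact h
    -- the K-basis of W₀ is F-linearly independent
    have hli : LinearIndependent F v := by
      rw [Fintype.linearIndependent_iff]
      intro gc hgc i₀
      let f : W₀' → W₀' := fun x => b.repr x i₀ • b i₀
      have hfadd : ∀ x y, f (x + y) = f x + f y := by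
        intro x y
        show b.repr (x + y) i₀ • b i₀ = b.repr x i₀ • b i₀ + b.repr y i₀ • b i₀
        rw [map_add, Finsupp.add_apply, add_smul]
      have hfcomm : ∀ ψ : Module.End (Amat p ρ) W₀', ∀ x, f (ψ x) = ψ (f x) := by
        intro ψ x
        obtain ⟨c, hcK, hcψ⟩ := hEscalar ψ
        have hψx : ψ x = (⟨c, hcK⟩ : K) • x :=
          Subtype.ext ((hcψ x).trans (hKsmul ⟨c, hcK⟩ x).symm)
        have hψfx : ψ (f x) = (⟨c, hcK⟩ : K) • f x :=
          Subtype.ext ((hcψ (f x)).trans (hKsmul ⟨c, hcK⟩ (f x)).symm)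
        rw [hψx, hψfx]
        show b.repr ((⟨c, hcK⟩ : K) • x) i₀ • b i₀ = (⟨c, hcK⟩ : K) • (b.repr x i₀ • b i₀)
        rw [map_smul, Finsupp.smul_apply, smul_eq_mul, mul_smul]
      obtain ⟨a, haf⟩ := density_aux (R := Amat p ρ) (M := W₀') f hfadd hfcomm
      have h1 : ∑ i, gc i • (a : Matrix (Fin n) (Fin n) F).mulVec (v i) = 0 := by
        have h8 := congrArg ((a : Matrix (Fin n) (Fin n) F).mulVecLin) hgc
        rw [map_sum] at h8
        simp only [map_smul] at h8
        simpa [Matrix.mulVecLin_apply] using h8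
      have h2 : ∀ i, (a : Matrix (Fin n) (Fin n) F).mulVec (v i)
          = ((b.repr (b i) i₀ : K) : F) • v i₀ := by
        intro i
        have h9 := congrArg Subtype.val (haf (b i))
        exact h9.symm
      rw [show (∑ i, gc i • (a : Matrix (Fin n) (Fin n) F).mulVec (v i))
          = ∑ i, gc i • (((b.repr (b i) i₀ : K) : F) • v i₀) from
        Finset.sum_congr rfl fun i _ => by rw [h2 i]] at h1
      have h3 : ∀ i, i ∈ Finset.univ → i ≠ i₀ →
          gc i • (((b.repr (b i) i₀ : K) : F) • v i₀) = 0 := by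
        intro i _ hne
        rw [Module.Basis.repr_self, Finsupp.single_apply, if_neg hne]
        simp
      rw [Finset.sum_eq_single_of_mem i₀ (Finset.mem_univ i₀) h3] at h1
      rw [Module.Basis.repr_self, Finsupp.single_apply, if_pos rfl] at h1
      simp only [OneMemClass.coe_one, one_smul] at h1
      have hvne : v i₀ ≠ 0 := by
        intro h
        exact (b.ne_zero i₀) (Subtype.ext h)
      rcases smul_eq_zero.mp h1 with h | h
      · exact h
      · exact absurd h hvne
    -- assemble an F-basis of the whole space from the K-basis of W₀
    let B : Module.Basis (Fin m) F (Fin n → F) := Module.Basis.mk hli (le_of_eq hspan.symm)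
    have hmn : m = n := by
      have h1 : Module.finrank F (Fin n → F) = m :=
        (Module.finrank_eq_card_basis B).trans (by simp)
      have h2 : Module.finrank F (Fin n → F) = n := by simp
      omega
    let e : Fin m ≃ Fin n := finCongr hmn
    let B' : Module.Basis (Fin n) F (Fin n → F) := B.reindex e
    have hB' : ∀ j, B' j = v (e.symm j) := fun j => by
      rw [Module.Basis.reindex_apply, Module.Basis.mk_apply]
    have hB'W : ∀ j, B' j ∈ W₀ := fun j => by rw [hB']; exact hvW _
    -- representation coefficients of elements of W₀ lie in K
    have hrepr : ∀ w ∈ W₀, ∀ i, B'.repr w i ∈ K := by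
      intro w hw i
      have hs : w = ∑ k : Fin n, ((b.repr ⟨w, hw⟩ (e.symm k) : K) : F) • B' k := by
        conv_lhs => rw [hdecomp w hw]
        refine Fintype.sum_equiv e _ _ fun l => ?_
        rw [hB']
        simp
      rw [hs]
      have h10 := B'.repr_sum_self (fun k => ((b.repr ⟨w, hw⟩ (e.symm k) : K) : F))
      rw [show (B'.repr (∑ k : Fin n, ((b.repr ⟨w, hw⟩ (e.symm k) : K) : F) • B' k)) i
          = ((b.repr ⟨w, hw⟩ (e.symm i) : K) : F) from congrFun h10 i]
      exact SetLike.coe_mem _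
    -- the change-of-basis matrix
    let e0 : Module.Basis (Fin n) F (Fin n → F) := Pi.basisFun F (Fin n)
    let M₀ : Matrix (Fin n) (Fin n) F := e0.toMatrix ⇑B'
    letI : Invertible M₀ := e0.invertibleToMatrix B'
    let Mu : GL (Fin n) F := unitOfInvertible M₀
    have hM₀ : ∀ i j, M₀ i j = B' j i := by
      intro i j
      show e0.toMatrix ⇑B' i j = B' j i
      rw [Module.Basis.toMatrix_apply, Pi.basisFun_repr]
    refine ⟨Mu, fun g i j => ?_⟩
    let Cg : Matrix (Fin n) (Fin n) F :=
      Matrix.of fun i j => B'.repr ((ρ g : Matrix (Fin n) (Fin n) F).mulVec (B' j)) i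
    have hCg : (ρ g : Matrix (Fin n) (Fin n) F) * M₀ = M₀ * Cg := by
      ext i j
      rw [Matrix.mul_apply, Matrix.mul_apply]
      have hl : ∑ k, (ρ g : Matrix (Fin n) (Fin n) F) i k * M₀ k j
          = ((ρ g : Matrix (Fin n) (Fin n) F).mulVec (B' j)) i := by
        rw [show ((ρ g : Matrix (Fin n) (Fin n) F).mulVec (B' j)) i
            = ∑ k, (ρ g : Matrix (Fin n) (Fin n) F) i k * B' j k from rfl]
        exact Finset.sum_congr rfl fun k _ => by rw [hM₀]
      have hr : ∑ k, M₀ i k * Cg k j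
          = ((ρ g : Matrix (Fin n) (Fin n) F).mulVec (B' j)) i := by
        have h5 := congrFun (B'.sum_repr ((ρ g : Matrix (Fin n) (Fin n) F).mulVec (B' j))) i
        rw [Finset.sum_apply] at h5
        rw [← h5]
        refine Finset.sum_congr rfl fun k _ => ?_
        rw [hM₀]
        show B' k i * B'.repr ((ρ g : Matrix (Fin n) (Fin n) F).mulVec (B' j)) k = _
        rw [Pi.smul_apply, smul_eq_mul, mul_comm]
      rw [hl, hr]
    have hval : (↑(Mu⁻¹ * ρ g * Mu) : Matrix (Fin n) (Fin n) F) = Cg := by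
      rw [Units.val_mul, Units.val_mul]
      have hvalinv : ((Mu⁻¹ : GL (Fin n) F) : Matrix (Fin n) (Fin n) F) = ⅟M₀ := rfl
      have hvalMu : ((Mu : GL (Fin n) F) : Matrix (Fin n) (Fin n) F) = M₀ := rfl
      rw [hvalinv, hvalMu, mul_assoc, hCg, invOf_mul_cancel_left]
    rw [hval]
    exact hrepr _ (hW₀inv g _ (hB'W j)) i
end

section
/- Let ρ be an absolutely irreducible representation of a group G over a finite field F of characteristic p, let F' = F^⟨σ₀⟩ be the fixed field of a nontrivial element σ₀ of Gal(F/F_p). If ρ^{σ₀} ≅ ρ (the Galois twist by σ₀ is isomorphic to ρ), then ρ can be realized over F'. -/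
open Finset Matrix
set_option linter.unusedSectionVars false
set_option maxHeartbeats 1000000
section Aux
variable {F : Type*} [Field F] [Fintype F]
open Finset

set_option linter.unusedSectionVars false
set_option maxHeartbeats 1000000

variable {F : Type*} [Field F] [Fintype F]

lemma stmt1_charind (σ : F ≃+* F) (m : ℕ) (hm : Set.InjOn (σ ^ ·) (Set.Iio m))
    (a : ℕ → F) (h : ∀ x : F, ∑ i ∈ range m, a i * (σ ^ i) x = 0) :
    ∀ i < m, a i = 0 := by
  have hinj : Function.Injective (fun i : Fin m => ((σ ^ (i : ℕ) : F ≃+* F) : F →* F)) := by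
    intro i j hij
    ext1
    exact hm i.2 j.2 (by ext x; exact DFunLike.congr_fun hij x)
  have hli : LinearIndependent F (fun i : Fin m => ⇑((σ ^ (i : ℕ) : F ≃+* F) : F →* F)) :=
    (linearIndependent_monoidHom F F).comp _ hinj
  have := (Fintype.linearIndependent_iff.1 hli) (fun i => a i) ?_
  · intro i hi; exact this ⟨i, hi⟩
  · funext x
    have := h x
    rw [← Fin.sum_univ_eq_sum_range (fun i => a i * (σ ^ i) x) m] at this
    simpa [Finset.sum_apply] using this
lemma stmt1_norm_surj (σ : F ≃+* F) (c : F) (hc : c ≠ 0) (hfix : σ c = c) :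
    ∃ l : F, l ≠ 0 ∧ ∏ i ∈ range (orderOf σ), (σ ^ i) l = c := by
  haveI : Finite (F ≃+* F) :=
    Finite.of_injective (fun e => (e : F → F)) (fun a b h => by ext x; exact congrFun h x)
  set m := orderOf σ with hmdef
  have hm0 : 0 < m := orderOf_pos σ
  have hσm : σ ^ m = 1 := pow_orderOf_eq_one σ
  have hσmx : ∀ x : F, (σ ^ m) x = x := fun x => by rw [hσm]; rfl
  have hσ0x : ∀ x : F, (σ ^ 0) x = x := fun x => rfl
  have hinj : Set.InjOn (σ ^ ·) (Set.Iio m) := pow_injOn_Iio_orderOf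
  let U : ℕ → Fˣ →* Fˣ := fun i => Units.map ((σ ^ i : F ≃+* F) : F →* F)
  have hU : ∀ i (u : Fˣ), ((U i u : F)) = (σ ^ i) (u : F) := fun _ _ => rfl
  let ν : Fˣ →* Fˣ := ∏ i ∈ range m, U i
  let δ : Fˣ →* Fˣ := MonoidHom.id Fˣ / U 1
  have hν : ∀ u : Fˣ, ν u = ∏ i ∈ range m, U i u := by
    intro u; simp [ν, Finset.prod_apply]
  have hνval : ∀ u : Fˣ, ((ν u : F)) = ∏ i ∈ range m, (σ ^ i) (u : F) := by
    intro u
    rw [hν]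
    rw [show ((∏ i ∈ range m, U i u : Fˣ) : F) = ∏ i ∈ range m, ((U i u : Fˣ) : F) from
      map_prod (Units.coeHom F) _ _]
    exact Finset.prod_congr rfl fun i _ => hU i u
  have hδ : ∀ u : Fˣ, δ u = u / U 1 u := fun u => rfl
  have hU1 : ∀ u : Fˣ, ((U 1 u : F)) = σ (u : F) := by
    intro u; rw [hU, pow_one]
  have hδker : ∀ u : Fˣ, u ∈ δ.ker ↔ σ (u : F) = (u : F) := by
    intro u
    rw [MonoidHom.mem_ker, hδ, div_eq_one]
    constructor
    · intro h
      rw [← hU1, ← h]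
    · intro h; ext; rw [hU1, h]
  have hfixprod : ∀ u : Fˣ, σ ((ν u : F)) = ((ν u : F)) := by
    intro u
    rw [hνval, map_prod]
    have e1 : ∀ i : ℕ, σ ((σ ^ i) (u:F)) = (σ ^ (i+1)) (u:F) := by
      intro i; rw [pow_succ']; rfl
    rw [Finset.prod_congr rfl fun i _ => e1 i]
    have h1 : ∏ i ∈ range (m+1), (σ ^ i) (u:F)
        = (∏ i ∈ range m, (σ ^ (i+1)) (u:F)) * (σ ^ 0) (u:F) :=
      Finset.prod_range_succ' _ m
    have h2 : ∏ i ∈ range (m+1), (σ ^ i) (u:F)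
        = (∏ i ∈ range m, (σ ^ i) (u:F)) * (σ ^ m) (u:F) :=
      Finset.prod_range_succ _ m
    rw [hσmx] at h2
    rw [hσ0x] at h1
    exact mul_right_cancel₀ u.ne_zero (h1.symm.trans h2)
  have hle : ν.range ≤ δ.ker := by
    rintro w ⟨u, rfl⟩
    rw [hδker]
    exact hfixprod u
  -- Hilbert 90 : ker ν ≤ range δ
  have hH90 : ν.ker ≤ δ.range := by
    intro u hu
    have hl0 : ((u : F)) ≠ 0 := u.ne_zero
    set l : F := (u : F) with hldef
    set a : ℕ → F := fun i => ∏ j ∈ range i, (σ ^ j) l with ha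
    have ha0 : a 0 = 1 := by simp [ha]
    have ham : a m = 1 := by
      have h1 := congrArg (Units.val) (MonoidHom.mem_ker.1 hu)
      rw [hνval] at h1
      simpa [ha] using h1
    have hastep : ∀ i, l * σ (a i) = a (i + 1) := by
      intro i
      show l * σ (∏ j ∈ range i, (σ ^ j) l) = ∏ j ∈ range (i+1), (σ ^ j) l
      rw [map_prod]
      have e1 : ∀ j : ℕ, σ ((σ ^ j) l) = (σ ^ (j+1)) l := by
        intro j; rw [pow_succ']; rfl
      rw [Finset.prod_congr rfl fun j _ => e1 j,
        Finset.prod_range_succ' (fun j => (σ ^ j) l) i]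
      rw [show ((σ ^ 0) l) = l from rfl, mul_comm]
    have hex : ∃ θ : F, ∑ i ∈ range m, a i * (σ ^ i) θ ≠ 0 := by
      by_contra h
      push_neg at h
      have := stmt1_charind σ m hinj a h 0 hm0
      rw [ha0] at this
      exact one_ne_zero this
    obtain ⟨θ, hθ⟩ := hex
    set α : F := ∑ i ∈ range m, a i * (σ ^ i) θ with hα
    have key : l * σ α = α := by
      rw [hα, map_sum, Finset.mul_sum]
      have term : ∀ i, l * (σ (a i * (σ ^ i) θ)) = a (i+1) * (σ ^ (i+1)) θ := by
        intro i
        rw [_root_.map_mul σ, ← mul_assoc, hastep]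
        congr 1
        rw [pow_succ']; rfl
      rw [Finset.sum_congr rfl fun i _ => term i]
      have h1 : ∑ i ∈ range (m+1), a i * (σ ^ i) θ
          = (∑ i ∈ range m, a (i+1) * (σ ^ (i+1)) θ) + a 0 * (σ ^ 0) θ :=
        Finset.sum_range_succ' _ m
      have h2 : ∑ i ∈ range (m+1), a i * (σ ^ i) θ
          = (∑ i ∈ range m, a i * (σ ^ i) θ) + a m * (σ ^ m) θ :=
        Finset.sum_range_succ _ m
      have hm' : a m * (σ ^ m) θ = a 0 * (σ ^ 0) θ := by
        rw [hσmx, ham, ha0, hσ0x]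
      rw [hm'] at h2
      exact add_right_cancel (h1.symm.trans h2)
    have hσα : σ α ≠ 0 := (map_ne_zero_iff _ σ.injective).2 hθ
    refine ⟨Units.mk0 α hθ, ?_⟩
    ext
    rw [hδ, Units.val_div_eq_div_val, hU1]
    show (α : F) / σ α = l
    rw [div_eq_iff hσα]
    exact key.symm
  -- counting
  have hcard : ∀ f : Fˣ →* Fˣ, Nat.card Fˣ = Nat.card f.range * Nat.card f.ker := by
    intro f
    rw [Subgroup.card_eq_card_quotient_mul_card_subgroup f.ker]
    congr 1
    exact Nat.card_congr (QuotientGroup.quotientKerEquivRange f).toEquiv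
  have hU0 : ∀ u : Fˣ, U 0 u = u := by intro u; ext; rw [hU, hσ0x]
  have hUm : ∀ u : Fˣ, U m u = u := by intro u; ext; rw [hU, hσmx]
  have hUcomp : ∀ i (u : Fˣ), U i (U 1 u) = U (i+1) u := by
    intro i u; ext; rw [hU, hU1, hU, pow_succ]; rfl
  have hkr : ν.ker = δ.range := le_antisymm hH90 (by
    rintro w ⟨u, rfl⟩
    rw [MonoidHom.mem_ker]
    calc ν (δ u) = ∏ i ∈ range m, U i (δ u) := hν _
      _ = ∏ i ∈ range m, (U i u / U (i+1) u) := by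
          refine Finset.prod_congr rfl fun i _ => ?_
          rw [hδ, map_div, hUcomp]
      _ = U 0 u / U m u := Finset.prod_range_div' (fun i => U i u) m
      _ = 1 := by rw [hU0, hUm, div_self'])
  have hc1 : Nat.card ν.range * Nat.card ν.ker = Nat.card δ.range * Nat.card δ.ker :=
    (hcard ν).symm.trans (hcard δ)
  rw [hkr] at hc1
  have hpos : 0 < Nat.card δ.range := Nat.card_pos
  have hc2 : Nat.card ν.range = Nat.card δ.ker := by
    rw [mul_comm (Nat.card δ.range) (Nat.card δ.ker)] at hc1
    exact Nat.eq_of_mul_eq_mul_right hpos hc1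
  have hrange : ν.range = δ.ker :=
    Subgroup.eq_of_le_of_card_ge hle (le_of_eq hc2.symm)
  have hcmem : Units.mk0 c hc ∈ δ.ker := (hδker _).2 hfix
  rw [← hrange] at hcmem
  obtain ⟨u, hu⟩ := hcmem
  refine ⟨(u : F), u.ne_zero, ?_⟩
  have := congrArg Units.val hu
  rw [hνval] at this
  simpa using this
lemma stmt1_descent {n : ℕ} {G : Type*} [Group G] (σ : F ≃+* F) (ρ : G →* GL (Fin n) F)
    (M : (Matrix (Fin n) (Fin n) F)ˣ)
    (hM : ∀ g : G, ((ρ g : Matrix (Fin n) (Fin n) F)) * (M : Matrix (Fin n) (Fin n) F)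
       = (M : Matrix (Fin n) (Fin n) F) * ((ρ g : Matrix (Fin n) (Fin n) F).map σ))
    (hP : ((List.range (orderOf σ)).map
        (fun i => (M : Matrix (Fin n) (Fin n) F).map ⇑(σ ^ i))).prod = 1) :
    ∃ N : GL (Fin n) F, ∀ g : G,
      (↑(N⁻¹ * ρ g * N) : Matrix (Fin n) (Fin n) F).map σ = ↑(N⁻¹ * ρ g * N) := by
  haveI : Finite (F ≃+* F) :=
    Finite.of_injective (fun e => (e : F → F)) (fun a b h => by ext x; exact congrFun h x)
  set m := orderOf σ with hmdef
  have hm0 : 0 < m := orderOf_pos σ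
  have hσm : σ ^ m = 1 := pow_orderOf_eq_one σ
  have hσmx : ∀ x : F, (σ ^ m) x = x := fun x => by rw [hσm]; rfl
  have hinj : Set.InjOn (σ ^ ·) (Set.Iio m) := pow_injOn_Iio_orderOf
  set V := (Fin n → F)
  let Pl : ℕ → Matrix (Fin n) (Fin n) F := fun k =>
    ((List.range k).map (fun i => (M : Matrix (Fin n) (Fin n) F).map ⇑(σ ^ i))).prod
  have hPl0 : Pl 0 = 1 := rfl
  have hPlsucc : ∀ k, Pl (k+1) = Pl k * (M : Matrix (Fin n) (Fin n) F).map ⇑(σ ^ k) :=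
    fun k => List.prod_range_succ _ k
  -- the semilinear map
  let φ : V → V := fun v => (M : Matrix (Fin n) (Fin n) F) *ᵥ (fun i => σ (v i))
  have hiter : ∀ (k : ℕ) (v : V), φ^[k] v = Pl k *ᵥ (fun i => (σ ^ k) (v i)) := by
    intro k
    induction k with
    | zero => intro v; simp [hPl0, Matrix.one_mulVec]
    | succ k ih =>
      intro v
      rw [Function.iterate_succ_apply, ih]
      have h1 : (fun i => (σ ^ k) ((φ v) i)) =
          ((M : Matrix (Fin n) (Fin n) F).map ⇑(σ ^ k)) *ᵥ (fun i => (σ ^ (k+1)) (v i)) := by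
        funext i
        calc (σ ^ k) ((φ v) i)
            = (σ ^ k) (∑ j, (M : Matrix (Fin n) (Fin n) F) i j * σ (v j)) := rfl
          _ = ∑ j, (σ ^ k) ((M : Matrix (Fin n) (Fin n) F) i j * σ (v j)) := map_sum _ _ _
          _ = ∑ j, ((M : Matrix (Fin n) (Fin n) F).map ⇑(σ ^ k)) i j * (σ ^ (k+1)) (v j) := by
              refine Finset.sum_congr rfl fun j _ => ?_
              rw [_root_.map_mul (σ ^ k), pow_succ]
              rfl
          _ = (((M : Matrix (Fin n) (Fin n) F).map ⇑(σ ^ k)) *ᵥ (fun j => (σ ^ (k+1)) (v j))) i :=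
              rfl
      rw [h1, Matrix.mulVec_mulVec, ← hPlsucc]
  have hφm : ∀ v : V, φ^[m] v = v := by
    intro v
    have hPm : Pl m = 1 := hP
    rw [hiter, hPm]
    have : (fun i => (σ ^ m) (v i)) = v := by funext i; rw [hσmx]
    rw [this, Matrix.one_mulVec]
  -- φ as an additive monoid hom
  have hadd : ∀ x y : V, φ (x + y) = φ x + φ y := by
    intro x y
    show (M : Matrix (Fin n) (Fin n) F) *ᵥ _ = _
    rw [show (fun i => σ ((x + y) i)) = (fun i => σ (x i)) + (fun i => σ (y i)) from
      funext fun i => map_add σ _ _, Matrix.mulVec_add]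
  have hsmul : ∀ (c : F) (x : V), φ (c • x) = σ c • φ x := by
    intro c x
    show (M : Matrix (Fin n) (Fin n) F) *ᵥ _ = _
    rw [show (fun i => σ ((c • x) i)) = σ c • (fun i => σ (x i)) from
      funext fun i => map_mul σ _ _, Matrix.mulVec_smul]
  let φₐ : V →+ V := AddMonoidHom.mk' φ hadd
  -- the fixed-point set spans
  let W : Set V := {v | φ v = v}
  have hspan : Submodule.span F W = ⊤ := by
    rw [Submodule.eq_top_iff']
    intro v
    set w : ℕ → V := fun i => φ^[i] v with hw
    have hw0 : w 0 = v := rfl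
    have hwm : w m = v := hφm v
    have hwsucc : ∀ i, φ (w i) = w (i + 1) := by
      intro i; rw [hw]; exact (Function.iterate_succ_apply' φ i v).symm
    let u : F → V := fun θ => ∑ i ∈ range m, (σ ^ i) θ • w i
    have humem : ∀ θ, u θ ∈ W := by
      intro θ
      show φ (u θ) = u θ
      show φₐ (∑ i ∈ range m, (σ ^ i) θ • w i) = _
      rw [map_sum]
      have e1 : ∀ i ∈ range m, φₐ ((σ ^ i) θ • w i) = (σ ^ (i+1)) θ • w (i+1) := by
        intro i _
        show φ ((σ ^ i) θ • w i) = _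
        rw [hsmul, hwsucc]
        congr 1
        rw [pow_succ']; rfl
      rw [Finset.sum_congr rfl e1]
      have h1 : ∑ i ∈ range (m+1), (σ ^ i) θ • w i
          = (∑ i ∈ range m, (σ ^ (i+1)) θ • w (i+1)) + (σ ^ 0) θ • w 0 :=
        Finset.sum_range_succ' _ m
      have h2 : ∑ i ∈ range (m+1), (σ ^ i) θ • w i
          = (∑ i ∈ range m, (σ ^ i) θ • w i) + (σ ^ m) θ • w m :=
        Finset.sum_range_succ _ m
      have hm' : (σ ^ m) θ • w m = (σ ^ 0) θ • w 0 := by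
        rw [hσmx, hwm, hw0]; rfl
      rw [hm'] at h2
      exact add_right_cancel (h1.symm.trans h2)
    have hvmem : v ∈ Submodule.span F (Set.range u) := by
      by_contra hv
      obtain ⟨f, hfv, hfmap⟩ :=
        Submodule.exists_dual_map_eq_bot_of_notMem hv inferInstance
      have hf0 : ∀ θ : F, f (u θ) = 0 := by
        intro θ
        have : f (u θ) ∈ Submodule.map f (Submodule.span F (Set.range u)) :=
          Submodule.mem_map_of_mem (Submodule.subset_span ⟨θ, rfl⟩)
        rw [hfmap] at this
        exact this
      have hchar := stmt1_charind σ m hinj (fun i => f (w i)) ?_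
      · exact hfv (by rw [← hw0]; exact hchar 0 hm0)
      · intro θ
        have := hf0 θ
        rw [show u θ = ∑ i ∈ range m, (σ ^ i) θ • w i from rfl, map_sum] at this
        simpa [mul_comm] using this
    refine Submodule.span_le.2 ?_ hvmem
    rintro x ⟨θ, rfl⟩
    exact Submodule.subset_span (humem θ)
  -- extract a basis inside W
  obtain ⟨s, hsW, hs_span, hs_li⟩ := exists_linearIndependent F W
  have hstop : ⊤ ≤ Submodule.span F (Set.range ((↑) : s → V)) := by
    rw [Subtype.range_coe, hs_span, hspan]
  let b0 : Module.Basis s F V := Module.Basis.mk hs_li hstop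
  let e : s ≃ Fin n := b0.indexEquiv (Pi.basisFun F (Fin n))
  let b : Module.Basis (Fin n) F V := b0.reindex e
  have hbW : ∀ j, b j ∈ W := by
    intro j
    rw [show b j = b0 (e.symm j) from b0.reindex_apply e j, Module.Basis.mk_apply]
    exact hsW (e.symm j).2
  let A : Matrix (Fin n) (Fin n) F := (Pi.basisFun F (Fin n)).toMatrix ⇑b
  have hA : ∀ i j, A i j = b j i := by
    intro i j
    rw [show A i j = (Pi.basisFun F (Fin n)).repr (b j) i from Module.Basis.toMatrix_apply _ _ _ _]
    simp
  haveI hAinv : Invertible A := (Pi.basisFun F (Fin n)).invertibleToMatrix b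
  have hmapmul : ∀ X Y : Matrix (Fin n) (Fin n) F, (X * Y).map ⇑σ = X.map ⇑σ * Y.map ⇑σ :=
    fun X Y => Matrix.map_mul (L := X) (M := Y) (f := σ.toRingHom)
  have hMA : (M : Matrix (Fin n) (Fin n) F) * A.map σ = A := by
    ext i j
    rw [Matrix.mul_apply]
    have : ∑ k, (M : Matrix (Fin n) (Fin n) F) i k * (A.map σ) k j
        = ((M : Matrix (Fin n) (Fin n) F) *ᵥ (fun k => σ (b j k))) i := by
      rw [Matrix.mulVec]
      simp [dotProduct, Matrix.map_apply, hA]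
    rw [this, show ((M : Matrix (Fin n) (Fin n) F) *ᵥ (fun k => σ (b j k))) = φ (b j) from rfl,
      hbW j, hA]
  refine ⟨unitOfInvertible A, ?_⟩
  intro g
  have hval : (↑((unitOfInvertible A)⁻¹ * ρ g * unitOfInvertible A) :
      Matrix (Fin n) (Fin n) F) = ⅟A * (ρ g : Matrix (Fin n) (Fin n) F) * A := by
    rfl
  rw [hval]
  set B : Matrix (Fin n) (Fin n) F := ⅟A * (ρ g : Matrix (Fin n) (Fin n) F) * A with hB
  have hAB : A * B = (ρ g : Matrix (Fin n) (Fin n) F) * A := by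
    rw [hB, ← Matrix.mul_assoc, ← Matrix.mul_assoc, mul_invOf_self, Matrix.one_mul]
  have key : A * B.map σ = A * B := by
    calc A * B.map σ = ((M : Matrix (Fin n) (Fin n) F) * A.map σ) * B.map σ := by rw [hMA]
      _ = (M : Matrix (Fin n) (Fin n) F) * (A * B).map σ := by
          rw [Matrix.mul_assoc, ← hmapmul]
      _ = (M : Matrix (Fin n) (Fin n) F) * ((ρ g : Matrix (Fin n) (Fin n) F) * A).map σ := by
          rw [hAB]
      _ = ((M : Matrix (Fin n) (Fin n) F) * (ρ g : Matrix (Fin n) (Fin n) F).map σ) * A.map σ := by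
          rw [hmapmul, Matrix.mul_assoc]
      _ = ((ρ g : Matrix (Fin n) (Fin n) F) * (M : Matrix (Fin n) (Fin n) F)) * A.map σ := by
          rw [hM]
      _ = (ρ g : Matrix (Fin n) (Fin n) F) * ((M : Matrix (Fin n) (Fin n) F) * A.map σ) := by
          rw [Matrix.mul_assoc]
      _ = (ρ g : Matrix (Fin n) (Fin n) F) * A := by rw [hMA]
      _ = A * B := hAB.symm
  calc B.map σ = (⅟A * A) * B.map σ := by rw [invOf_mul_self, Matrix.one_mul]
    _ = ⅟A * (A * B) := by rw [Matrix.mul_assoc, key]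
    _ = (⅟A * A) * B := by rw [Matrix.mul_assoc]
    _ = B := by rw [invOf_mul_self, Matrix.one_mul]
end Aux

/-- Let `ρ` be an absolutely irreducible representation of a group `G` over a
finite field `F` of characteristic `p` (absolute irreducibility encoded by irreducibility plus
scalar commutant), and let `F' = F^⟨σ₀⟩` be the fixed field of a nontrivial element `σ₀` of
`Gal(F/𝔽_p)` (for a finite field every ring automorphism is `𝔽_p`-linear).  If the Galois twist
`ρ^{σ₀}` is isomorphic to `ρ`, i.e. some `M ∈ GL_n(F)` conjugates `ρ` to its entrywise `σ₀`-twist,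
then `ρ` can be realized over `F'`: it is conjugate to a representation all of whose matrix
entries are fixed by `σ₀`. -/
theorem stmt1 {p : ℕ} [Fact p.Prime] {F : Type*} [Field F] [Fintype F] [CharP F p]
    {G : Type*} [Group G] {n : ℕ} (ρ : G →* GL (Fin n) F)
    (hirr : ∀ U : Submodule F (Fin n → F),
      (∀ g : G, ∀ x ∈ U, (ρ g : Matrix (Fin n) (Fin n) F).mulVec x ∈ U) → U = ⊥ ∨ U = ⊤)
    (hcomm : ∀ f : Matrix (Fin n) (Fin n) F,
      (∀ g : G, f * (ρ g : Matrix (Fin n) (Fin n) F) = (ρ g : Matrix (Fin n) (Fin n) F) * f) →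
      ∃ c : F, f = c • (1 : Matrix (Fin n) (Fin n) F))
    (σ₀ : F ≃+* F) (hσ₀ : σ₀ ≠ RingEquiv.refl F)
    (htwist : ∃ M : GL (Fin n) F, ∀ g : G,
      (↑(M⁻¹ * ρ g * M) : Matrix (Fin n) (Fin n) F)
        = (ρ g : Matrix (Fin n) (Fin n) F).map σ₀) :
    ∃ N : GL (Fin n) F, ∀ g : G, ∀ i j,
      σ₀ ((↑(N⁻¹ * ρ g * N) : Matrix (Fin n) (Fin n) F) i j)
        = (↑(N⁻¹ * ρ g * N) : Matrix (Fin n) (Fin n) F) i j := by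
  classical
  rcases Nat.eq_zero_or_pos n with hn | hn
  · subst hn
    exact ⟨1, fun g i j => absurd i.isLt (by omega)⟩
  obtain ⟨M, hMtw⟩ := htwist
  haveI : Finite (F ≃+* F) :=
    Finite.of_injective (fun e => (e : F → F)) (fun a b h => by ext x; exact congrFun h x)
  set m := orderOf σ₀ with hmdef
  have hm0 : 0 < m := orderOf_pos σ₀
  have hσm : σ₀ ^ m = 1 := pow_orderOf_eq_one σ₀
  have hσmx : ∀ x : F, (σ₀ ^ m) x = x := fun x => by rw [hσm]; rfl
  have i0 : Fin n := ⟨0, hn⟩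
  -- basic twist relation at the matrix level
  have hM : ∀ g : G, ((ρ g : Matrix (Fin n) (Fin n) F)) * (M : Matrix (Fin n) (Fin n) F)
      = (M : Matrix (Fin n) (Fin n) F) * ((ρ g : Matrix (Fin n) (Fin n) F).map σ₀) := by
    intro g
    have h1 := hMtw g
    have h2 : (↑(M⁻¹ * ρ g * M) : Matrix (Fin n) (Fin n) F)
        = (↑(M⁻¹) : Matrix (Fin n) (Fin n) F) * (ρ g : Matrix (Fin n) (Fin n) F)
          * (M : Matrix (Fin n) (Fin n) F) := rfl
    rw [h2] at h1
    have h3 := congrArg (fun X => (M : Matrix (Fin n) (Fin n) F) * X) h1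
    rw [← Matrix.mul_assoc, ← Matrix.mul_assoc, Units.mul_inv, Matrix.one_mul] at h3
    exact h3
  -- helper map lemmas
  have hmapmulk : ∀ (k : ℕ) (X Y : Matrix (Fin n) (Fin n) F),
      (X * Y).map ⇑(σ₀ ^ k) = X.map ⇑(σ₀ ^ k) * Y.map ⇑(σ₀ ^ k) :=
    fun k X Y => Matrix.map_mul (L := X) (M := Y) (f := (σ₀ ^ k : F ≃+* F).toRingHom)
  have hmap0 : ∀ X : Matrix (Fin n) (Fin n) F, X.map ⇑(σ₀ ^ 0) = X := by
    intro X; ext i j; show ((σ₀ ^ 0 : F ≃+* F)) (X i j) = X i j; rw [pow_zero]; rfl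
  have hmapm : ∀ X : Matrix (Fin n) (Fin n) F, X.map ⇑(σ₀ ^ m) = X := by
    intro X; ext i j; exact hσmx (X i j)
  have hmapmap : ∀ (k : ℕ) (X : Matrix (Fin n) (Fin n) F),
      (X.map ⇑σ₀).map ⇑(σ₀ ^ k) = X.map ⇑(σ₀ ^ (k+1)) := by
    intro k X
    ext i j
    show (σ₀ ^ k) (σ₀ (X i j)) = (σ₀ ^ (k+1)) (X i j)
    rw [pow_succ]; rfl
  have hmapmap' : ∀ (k : ℕ) (X : Matrix (Fin n) (Fin n) F),
      (X.map ⇑(σ₀ ^ k)).map ⇑σ₀ = X.map ⇑(σ₀ ^ (k+1)) := by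
    intro k X
    ext i j
    show σ₀ ((σ₀ ^ k) (X i j)) = (σ₀ ^ (k+1)) (X i j)
    rw [pow_succ']; rfl
  -- the product cocycle
  set Pl : ℕ → Matrix (Fin n) (Fin n) F := fun k =>
    ((List.range k).map (fun i => (M : Matrix (Fin n) (Fin n) F).map ⇑(σ₀ ^ i))).prod with hPldef
  have hPl0 : Pl 0 = 1 := rfl
  have hPlsucc : ∀ k, Pl (k+1) = Pl k * (M : Matrix (Fin n) (Fin n) F).map ⇑(σ₀ ^ k) :=
    fun k => List.prod_range_succ _ k
  have hMk : ∀ (k : ℕ) (g : G),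
      (ρ g : Matrix (Fin n) (Fin n) F).map ⇑(σ₀ ^ k) * (M : Matrix (Fin n) (Fin n) F).map ⇑(σ₀ ^ k)
      = (M : Matrix (Fin n) (Fin n) F).map ⇑(σ₀ ^ k)
        * (ρ g : Matrix (Fin n) (Fin n) F).map ⇑(σ₀ ^ (k+1)) := by
    intro k g
    rw [← hmapmulk, hM g, hmapmulk, hmapmap]
  have hPcomm : ∀ (k : ℕ) (g : G), (ρ g : Matrix (Fin n) (Fin n) F) * Pl k
      = Pl k * (ρ g : Matrix (Fin n) (Fin n) F).map ⇑(σ₀ ^ k) := by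
    intro k
    induction k with
    | zero =>
      intro g
      rw [hPl0, hmap0, Matrix.mul_one, Matrix.one_mul]
    | succ k ih =>
      intro g
      rw [hPlsucc, ← Matrix.mul_assoc, ih g, Matrix.mul_assoc, hMk k g, ← Matrix.mul_assoc]
  obtain ⟨c, hc⟩ := hcomm (Pl m) (fun g => by rw [← hmapm (ρ g : Matrix (Fin n) (Fin n) F)]
                                              nth_rewrite 2 [hmapm]
                                              exact (hPcomm m g).symm)
  -- the product as a unit
  set Ul : ℕ → (Matrix (Fin n) (Fin n) F)ˣ := fun i =>
    Units.map ((σ₀ ^ i : F ≃+* F)).toRingHom.mapMatrix.toMonoidHom M with hUldef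
  have hUlval : ∀ i, ((Ul i : Matrix (Fin n) (Fin n) F))
      = (M : Matrix (Fin n) (Fin n) F).map ⇑(σ₀ ^ i) := fun i => rfl
  set PU : ℕ → (Matrix (Fin n) (Fin n) F)ˣ := fun k => ((List.range k).map Ul).prod with hPUdef
  have hPUval : ∀ k, ((PU k : Matrix (Fin n) (Fin n) F)) = Pl k := by
    intro k
    induction k with
    | zero => rfl
    | succ k ih =>
      have h1 : PU (k+1) = PU k * Ul k := List.prod_range_succ _ k
      rw [h1, Units.val_mul, ih, hUlval, hPlsucc]
  have hcne : c ≠ 0 := by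
    intro h0
    have h1 : ((PU m : Matrix (Fin n) (Fin n) F)) = 0 := by
      rw [hPUval, hc, h0, zero_smul]
    have h2 := Units.mul_inv (PU m)
    rw [h1, Matrix.zero_mul] at h2
    have h3 := congrFun (congrFun h2 i0) i0
    simp [Matrix.zero_apply, Matrix.one_apply] at h3
  -- c is fixed by σ₀
  have hQl : ∀ k, (M : Matrix (Fin n) (Fin n) F)
      * ((List.range k).map (fun i => (M : Matrix (Fin n) (Fin n) F).map ⇑(σ₀ ^ (i+1)))).prod
      = Pl k * (M : Matrix (Fin n) (Fin n) F).map ⇑(σ₀ ^ k) := by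
    intro k
    induction k with
    | zero =>
      show (M : Matrix (Fin n) (Fin n) F) * 1 = 1 * _
      rw [hmap0, Matrix.mul_one, Matrix.one_mul]
    | succ k ih =>
      rw [List.prod_range_succ, ← Matrix.mul_assoc, ih, hPlsucc]
  have hPlmapσ : ∀ k, (Pl k).map ⇑σ₀
      = ((List.range k).map (fun i => (M : Matrix (Fin n) (Fin n) F).map ⇑(σ₀ ^ (i+1)))).prod := by
    intro k
    induction k with
    | zero =>
      show (1 : Matrix (Fin n) (Fin n) F).map ⇑σ₀ = 1
      ext i j
      simp [Matrix.map_apply, Matrix.one_apply, apply_ite ⇑σ₀]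
    | succ k ih =>
      have hmapmul1 : ∀ X Y : Matrix (Fin n) (Fin n) F,
          (X * Y).map ⇑σ₀ = X.map ⇑σ₀ * Y.map ⇑σ₀ :=
        fun X Y => Matrix.map_mul (L := X) (M := Y) (f := σ₀.toRingHom)
      rw [hPlsucc, hmapmul1, ih, hmapmap', List.prod_range_succ]
  have hMP : (M : Matrix (Fin n) (Fin n) F) * (Pl m).map ⇑σ₀
      = Pl m * (M : Matrix (Fin n) (Fin n) F) := by
    rw [hPlmapσ m, hQl m, hmapm]
  have hsmulmap : ((c • (1 : Matrix (Fin n) (Fin n) F)).map ⇑σ₀)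
      = σ₀ c • (1 : Matrix (Fin n) (Fin n) F) := by
    ext i j
    simp [Matrix.map_apply, Matrix.smul_apply, Matrix.one_apply, apply_ite ⇑σ₀,
      smul_eq_mul, mul_ite, mul_one, mul_zero]
  rw [hc, hsmulmap] at hMP
  have h3 : σ₀ c • (M : Matrix (Fin n) (Fin n) F) = c • (M : Matrix (Fin n) (Fin n) F) := by
    calc σ₀ c • (M : Matrix (Fin n) (Fin n) F)
        = (M : Matrix (Fin n) (Fin n) F) * (σ₀ c • 1) := by
          rw [mul_smul_comm, Matrix.mul_one]
      _ = (c • 1) * (M : Matrix (Fin n) (Fin n) F) := hMP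
      _ = c • (M : Matrix (Fin n) (Fin n) F) := by rw [smul_mul_assoc, Matrix.one_mul]
  have hfixc : σ₀ c = c := by
    by_contra hne
    have h4 : (σ₀ c - c) • (M : Matrix (Fin n) (Fin n) F) = 0 := by
      rw [sub_smul, h3, sub_self]
    have hM0 : (M : Matrix (Fin n) (Fin n) F) = 0 := by
      have h5 := congrArg (fun X => (σ₀ c - c)⁻¹ • X) h4
      simpa [smul_smul, inv_mul_cancel₀ (sub_ne_zero.2 hne)] using h5
    have h2 := Units.mul_inv M
    rw [hM0, Matrix.zero_mul] at h2
    have h6 := congrFun (congrFun h2 i0) i0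
    simp [Matrix.zero_apply, Matrix.one_apply] at h6
  -- normalize by a scalar with prescribed norm
  obtain ⟨l, hl0, hlprod⟩ := stmt1_norm_surj σ₀ c⁻¹ (inv_ne_zero hcne)
    (by rw [map_inv₀, hfixc])
  have hMM' : (l • (M : Matrix (Fin n) (Fin n) F))
      * (l⁻¹ • ((M⁻¹ : (Matrix (Fin n) (Fin n) F)ˣ) : Matrix (Fin n) (Fin n) F)) = 1 := by
    rw [smul_mul_assoc, mul_smul_comm, smul_smul, mul_inv_cancel₀ hl0, one_smul, Units.mul_inv]
  have hM'M : (l⁻¹ • ((M⁻¹ : (Matrix (Fin n) (Fin n) F)ˣ) : Matrix (Fin n) (Fin n) F))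
      * (l • (M : Matrix (Fin n) (Fin n) F)) = 1 := by
    rw [smul_mul_assoc, mul_smul_comm, smul_smul, inv_mul_cancel₀ hl0, one_smul, Units.inv_mul]
  set M' : (Matrix (Fin n) (Fin n) F)ˣ :=
    ⟨l • (M : Matrix (Fin n) (Fin n) F),
     l⁻¹ • ((M⁻¹ : (Matrix (Fin n) (Fin n) F)ˣ) : Matrix (Fin n) (Fin n) F), hMM', hM'M⟩
    with hM'def
  have hM' : ∀ g : G, (ρ g : Matrix (Fin n) (Fin n) F) * (M' : Matrix (Fin n) (Fin n) F)
      = (M' : Matrix (Fin n) (Fin n) F) * ((ρ g : Matrix (Fin n) (Fin n) F).map σ₀) := by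
    intro g
    show (ρ g : Matrix (Fin n) (Fin n) F) * (l • (M : Matrix (Fin n) (Fin n) F))
      = (l • (M : Matrix (Fin n) (Fin n) F)) * _
    rw [mul_smul_comm, hM g, smul_mul_assoc]
  have hfac : ∀ i : ℕ, (M' : Matrix (Fin n) (Fin n) F).map ⇑(σ₀ ^ i)
      = (σ₀ ^ i) l • ((M : Matrix (Fin n) (Fin n) F).map ⇑(σ₀ ^ i)) := by
    intro i
    ext a b
    show (σ₀ ^ i) ((l • (M : Matrix (Fin n) (Fin n) F)) a b) = _
    rw [Matrix.smul_apply, smul_eq_mul, _root_.map_mul (σ₀ ^ i)]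
    rfl
  have hgen : ∀ k, ((List.range k).map
        (fun i => (M' : Matrix (Fin n) (Fin n) F).map ⇑(σ₀ ^ i))).prod
      = (∏ i ∈ Finset.range k, (σ₀ ^ i) l) • Pl k := by
    intro k
    induction k with
    | zero => simp [hPl0]
    | succ k ih =>
      rw [List.prod_range_succ, ih, hfac, hPlsucc, Finset.prod_range_succ,
        smul_mul_assoc, mul_smul_comm, smul_smul]
  have hP' : ((List.range m).map
      (fun i => (M' : Matrix (Fin n) (Fin n) F).map ⇑(σ₀ ^ i))).prod = 1 := by
    rw [hgen m, hlprod, hc, smul_smul, inv_mul_cancel₀ hcne, one_smul]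
  obtain ⟨N, hN⟩ := stmt1_descent σ₀ ρ M' hM' hP'
  exact ⟨N, fun g i j => congrFun (congrFun (hN g) i) j⟩
end

section
/- Let E/F be a quadratic extension of finite fields with involution x ↦ x̄. For n > 2, given any element ξ ∈ E with ξ̄ = -ξ (purely imaginary), there exist vectors (α_2,…,α_n) and (β_2,…,β_n) in E^{n-1} each of Hermitian norm 1 (∑ α_i ᾱ_i = ∑ β_i β̄_i = 1) such that ∑_i (ᾱ_i β_i − α_i β̄_i) = ξ. -/
open Finset

/-- In `E` with `card E = q²`, every element fixed by `x ↦ x^q` is a norm, i.e. of the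
form `x^(q+1)`. -/
lemma normSurj6 {E : Type*} [Field E] [Fintype E] (q : ℕ) (hq1 : 1 < q)
    (hcard : Fintype.card E = q ^ 2) (c : E) (hc : c ^ q = c) :
    ∃ x : E, x ^ (q + 1) = c := by
  classical
  rcases eq_or_ne c 0 with rfl | hc0
  · exact ⟨0, zero_pow (by omega)⟩
  · -- work in the unit group
    set u : Eˣ := Units.mk0 c hc0 with hu
    obtain ⟨g, hg⟩ := IsCyclic.exists_generator (α := Eˣ)
    obtain ⟨j, hj⟩ := mem_powers_iff_mem_zpowers.mpr (hg u)
    have hj' : g ^ j = u := hj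
    have horder : orderOf g = q ^ 2 - 1 := by
      rw [orderOf_eq_card_of_forall_mem_zpowers hg, Nat.card_eq_fintype_card,
        Fintype.card_units, hcard]
    have hcq : c ^ (q - 1) = 1 := by
      have : c ^ (q - 1) * c = 1 * c := by
        rw [one_mul, ← pow_succ]
        have : q - 1 + 1 = q := by omega
        rw [this, hc]
      exact mul_right_cancel₀ hc0 this
    have huq : u ^ (q - 1) = 1 := by
      ext
      simpa [hu] using hcq
    have hgj : g ^ (j * (q - 1)) = 1 := by
      rw [pow_mul, hj', huq]
    have hdvd : q ^ 2 - 1 ∣ j * (q - 1) := by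
      rw [← horder]; exact orderOf_dvd_of_pow_eq_one hgj
    have hfac : q ^ 2 - 1 = (q + 1) * (q - 1) := by
      simpa using Nat.sq_sub_sq q 1
    have hdvd2 : (q + 1) ∣ j := by
      refine Nat.dvd_of_mul_dvd_mul_right (by omega : 0 < q - 1) ?_
      rw [← hfac]; exact hdvd
    obtain ⟨k, hk⟩ := hdvd2
    refine ⟨(g ^ k : Eˣ), ?_⟩
    have : ((g ^ k) ^ (q + 1) : Eˣ) = u := by
      rw [← pow_mul, mul_comm, ← hk, hj']
    calc ((g ^ k : Eˣ) : E) ^ (q + 1) = (((g ^ k) ^ (q + 1) : Eˣ) : E) := by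
          push_cast; ring
      _ = c := by rw [this]; simp [hu]

/-- Let `E = 𝔽_{q²}` with `q` odd, with involution the Frobenius `x ↦ x^q`
(so `F = 𝔽_q` is the fixed field).  For `n > 2`, given any purely imaginary `ξ ∈ E`
(i.e. `ξ^q = -ξ`), there exist vectors `(α_2, …, α_n)` and `(β_2, …, β_n)` in `E^{n-1}`, each of
Hermitian norm `1`, such that `∑ᵢ (ᾱᵢ βᵢ − αᵢ β̄ᵢ) = ξ`. -/
theorem stmt6 {E : Type*} [Field E] [Fintype E] (q : ℕ) (hq : Odd q)
    (hcard : Fintype.card E = q ^ 2)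
    (n : ℕ) (hn : 2 < n) (ξ : E) (hξ : ξ ^ q = -ξ) :
    ∃ α β : Fin (n - 1) → E,
      (∑ i, α i * (α i) ^ q = 1) ∧
      (∑ i, β i * (β i) ^ q = 1) ∧
      (∑ i, ((α i) ^ q * β i - α i * (β i) ^ q) = ξ) := by
  -- basic numerics
  have hq1 : 1 < q := by
    have h2c : 1 < q ^ 2 := hcard ▸ Fintype.one_lt_card
    by_contra h
    push_neg at h
    interval_cases q <;> simp at h2c
  -- the characteristic
  set p := ringChar E with hp
  haveI hpfact : Fact p.Prime := ⟨CharP.char_is_prime E p⟩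
  obtain ⟨m, hpm, hcard'⟩ := FiniteField.card E p
  have hqpow : ∃ k : ℕ, q = p ^ k := by
    have hdvd : q ∣ p ^ (m : ℕ) := by
      rw [← hcard', hcard]
      exact Dvd.intro q (by ring)
    obtain ⟨k, _, hk⟩ := (Nat.dvd_prime_pow hpm).1 hdvd
    exact ⟨k, hk⟩
  obtain ⟨k, hk⟩ := hqpow
  -- Frobenius x ↦ x^q is a ring hom
  haveI : ExpChar E p := ExpChar.prime hpm
  let φ : E →+* E := iterateFrobenius E p k
  have hφ : ∀ x : E, φ x = x ^ q := fun x => by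
    rw [hk]; exact iterateFrobenius_def ..
  -- p is odd, so 2 ≠ 0
  have hp2 : p ≠ 2 := by
    intro h
    have : Odd (p ^ k) := hk ▸ hq
    rw [h] at this
    rcases Nat.even_or_odd k with hke | hko
    · have : p ^ k ≠ 1 := by rw [← hk]; omega
      rw [h] at this
      rcases Nat.eq_zero_or_pos k with rfl | hkpos
      · simp at this
      · have : Even (2 ^ k) := by
          rcases Nat.exists_eq_succ_of_ne_zero hkpos.ne' with ⟨l, rfl⟩
          rw [pow_succ]; exact Even.mul_left even_two _
        simp [Nat.even_iff, Nat.odd_iff] at this ‹Odd (2^k)›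
        omega
    · have : Even (2 ^ k) := by
        rcases hko with ⟨l, rfl⟩
        rw [pow_succ]
        exact Even.mul_left even_two _
      simp [Nat.even_iff, Nat.odd_iff] at this ‹Odd (2^k)›
      omega
  have h2 : (2 : E) ≠ 0 := Ring.two_ne_zero (by rw [← hp]; exact hp2)
  -- set η := ξ/2
  set η : E := ξ * 2⁻¹ with hη
  have h2q : (2 : E) ^ q = 2 := by
    have := map_natCast φ 2
    rw [hφ] at this
    simpa using this
  have hηq : η ^ q = -η := by
    rw [hη, mul_pow, hξ, inv_pow, h2q, neg_mul]
  -- the norm target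
  set c : E := 1 + η ^ 2 with hc
  have hcfix : c ^ q = c := by
    rw [hc, ← hφ, map_add, map_one, map_pow, hφ, hηq]
    ring
  obtain ⟨x, hx⟩ := normSurj6 q hq1 hcard c hcfix
  -- indices
  have hn1 : 1 < n - 1 := by omega
  set i0 : Fin (n - 1) := ⟨0, by omega⟩ with hi0
  set i1 : Fin (n - 1) := ⟨1, by omega⟩ with hi1
  have hne : i0 ≠ i1 := by
    simp [hi0, hi1, Fin.ext_iff]
  have hsum : ∀ f : Fin (n - 1) → E, (∀ i, i ≠ i0 → i ≠ i1 → f i = 0) →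
      ∑ i, f i = f i0 + f i1 := by
    intro f hf
    rw [← Finset.sum_subset (Finset.subset_univ {i0, i1})]
    · rw [Finset.sum_pair hne]
    · intro i _ hi
      simp only [Finset.mem_insert, Finset.mem_singleton, not_or] at hi
      exact hf i hi.1 hi.2
  have hq0 : q ≠ 0 := by omega
  refine ⟨fun i => if i = i0 then 1 else 0,
          fun i => if i = i0 then η else if i = i1 then x else 0, ?_, ?_, ?_⟩
  · rw [hsum _ (fun i h0 h1 => by simp [h0, zero_pow hq0])]
    simp [hne, hne.symm, zero_pow hq0]
  · rw [hsum _ (fun i h0 h1 => by simp [h0, h1, zero_pow hq0])]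
    simp only [if_pos rfl, if_neg hne, if_neg hne.symm, if_true]
    rw [hηq]
    rw [show x * x ^ q = c from by rw [← hx, pow_succ'], hc]
    ring
  · rw [hsum _ (fun i h0 h1 => by simp [h0, h1, zero_pow hq0])]
    simp only [if_pos rfl, if_neg hne, if_neg hne.symm, if_true, one_pow, one_mul,
      mul_zero, zero_mul, zero_pow hq0, sub_zero, add_zero]
    rw [hηq, sub_neg_eq_add, hη]
    field_simp
    ring
end

section
/- Let G be a group of invertible linear transformations of a vector space V over a field of odd characteristic p, preserving a direct sum decomposition V = V_1 ⊕ … ⊕ V_k setwise (permuting the summands). Then any transvection in G acts trivially on the set {V_1,…,V_k}. -/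
/-- Let `G` be a group of invertible linear transformations of a vector space
`V` over a field of odd characteristic `p`, preserving a direct sum decomposition
`V = V_1 ⊕ ⋯ ⊕ V_k` setwise (permuting the summands).  Then any transvection in `G`
(a map `T(x) = x + ξ(x) u` with `u ≠ 0`, `ξ ≠ 0`, `ξ(u) = 0`) acts trivially on the set
`{V_1, …, V_k}`, i.e. `T(Vᵢ) = Vᵢ` for all `i`. -/
theorem stmt10 {p : ℕ} [Fact p.Prime] (hp : Odd p) {F V : Type*} [Field F] [CharP F p]
    [AddCommGroup V] [Module F V] {k : ℕ} (Vs : Fin k → Submodule F V)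
    (hind : iSupIndep Vs) (hsup : ⨆ i, Vs i = ⊤)
    (u : V) (hu : u ≠ 0) (ξ : V →ₗ[F] F) (hξ : ξ ≠ 0) (hξu : ξ u = 0)
    (T : V ≃ₗ[F] V) (hT : ∀ x : V, T x = x + ξ x • u)
    (hperm : ∀ i : Fin k, ∃ j : Fin k, (Vs i).map (T : V →ₗ[F] V) = Vs j) :
    ∀ i : Fin k, (Vs i).map (T : V →ₗ[F] V) = Vs i := by
  have hp' : p.Prime := Fact.out
  have h2 : (2 : F) ≠ 0 := by
    have : ((2 : ℕ) : F) ≠ 0 := by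
      rw [Ne, CharP.cast_eq_zero_iff F p]
      intro hd
      have := (Nat.prime_dvd_prime_iff_eq hp' Nat.prime_two).mp hd
      rw [this] at hp
      simp [Nat.odd_iff] at hp
    simpa using this
  have key : ∀ v : V, (2 : F) • T v = v + T (T v) := by
    intro v
    rw [hT (T v), hT v]
    simp only [map_add, map_smul, hξu, smul_eq_mul, mul_zero, add_zero]
    module
  intro i
  obtain ⟨j, hj⟩ := hperm i
  by_cases hji : Vs j = Vs i
  · rw [hj, hji]
  obtain ⟨j', hj'⟩ := hperm j
  by_cases hjj : j' = j
  · exfalso; apply hji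
    have heq : (Vs i).map (T : V →ₗ[F] V) = (Vs j).map (T : V →ₗ[F] V) := by
      rw [hj, hj', hjj]
    exact (Submodule.map_injective_of_injective T.injective heq).symm
  · have hij : i ≠ j := fun h => hji (by rw [h])
    exfalso; apply hji
    have hbot : Vs i = ⊥ := by
      rw [eq_bot_iff]; intro v hv
      have hTv : T v ∈ Vs j := hj ▸ Submodule.mem_map_of_mem hv
      have hTTv : T (T v) ∈ Vs j' := hj' ▸ Submodule.mem_map_of_mem hTv
      have hmem : T v ∈ Vs i ⊔ Vs j' := by
        have hTveq : T v = (2 : F)⁻¹ • (v + T (T v)) := by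
          rw [← key v, smul_smul, inv_mul_cancel₀ h2, one_smul]
        rw [hTveq]
        exact Submodule.smul_mem _ _
          (Submodule.add_mem _ (Submodule.mem_sup_left hv) (Submodule.mem_sup_right hTTv))
      have hdisj := hind j
      have hle : Vs i ⊔ Vs j' ≤ ⨆ (l) (_ : l ≠ j), Vs l :=
        sup_le (le_iSup₂ (f := fun l _ => Vs l) i hij)
          (le_iSup₂ (f := fun l _ => Vs l) j' hjj)
      have hTv0 : T v ∈ (⊥ : Submodule F V) :=
        hdisj.le_bot (Submodule.mem_inf.mpr ⟨hTv, hle hmem⟩)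
      have hv0 : v = 0 := T.injective (by rw [(Submodule.mem_bot F).mp hTv0, map_zero])
      simp [hv0]
    rw [hbot, Submodule.map_bot] at hj
    rw [hbot, ← hj]
end

section
/- Let V be a finite-dimensional vector space over F_q with q odd, H ≤ GL(V) a subgroup preserving a nondegenerate Hermitian form h (relative to F_{q^2}/F_q structure or unitary setting), generated by unitary transvections. If W ⊆ V is an H-invariant subspace and u is an isotropic vector such that all unitary transvections with direction u lie in H, then u ∈ W or u ∈ W^⊥. -/
/-- Let `V` be a finite-dimensional vector space carrying a nondegenerate
Hermitian form `h` (relative to a quadratic extension with involution, in the unitary setting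
with odd characteristic, encoded by the existence of a nonzero purely imaginary scalar), and let
`H ≤ GL(V)` be a subgroup preserving `h` and generated by unitary transvections
(maps `x ↦ x + c·h(x,u)·u` with `u` isotropic, preserving `h`).  If `W ⊆ V` is an `H`-invariant
subspace and `u` is an isotropic vector such that all unitary transvections with direction `u`
lie in `H`, then `u ∈ W` or `u ∈ W^⊥`. -/
theorem stmt11 {E V : Type*} [Field E] [StarRing E] [AddCommGroup V] [Module E V]
    [FiniteDimensional E V]
    (himag : ∃ c : E, c ≠ 0 ∧ star c = -c)
    (h : V →ₗ[E] V →ₛₗ[starRingEnd E] E)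
    (hherm : ∀ x y : V, h x y = star (h y x))
    (hnd : ∀ x : V, (∀ y : V, h x y = 0) → x = 0)
    (H : Subgroup (V ≃ₗ[E] V))
    (hHisom : ∀ g ∈ H, ∀ x y : V, h (g x) (g y) = h x y)
    (hgen : ∃ S : Set (V ≃ₗ[E] V),
      (∀ T ∈ S, ∃ (w : V) (c : E), h w w = 0 ∧ ∀ x : V, T x = x + (c * h x w) • w) ∧
      H = Subgroup.closure S)
    (W : Submodule E V) (hWinv : ∀ g ∈ H, ∀ x ∈ W, g x ∈ W)
    (u : V) (hu : h u u = 0)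
    (htrans : ∀ (T : V ≃ₗ[E] V) (c : E),
      (∀ x : V, T x = x + (c * h x u) • u) → (∀ x y : V, h (T x) (T y) = h x y) → T ∈ H) :
    u ∈ W ∨ ∀ w ∈ W, h u w = 0 := by
  classical
  by_cases hperp : ∀ w ∈ W, h u w = 0
  · exact Or.inr hperp
  push_neg at hperp
  obtain ⟨w, hwW, hw⟩ := hperp
  obtain ⟨c, hc0, hcs⟩ := himag
  -- the transvection and its inverse as linear maps
  have hlin : ∀ d : E, ∃ f : V →ₗ[E] V, ∀ x, f x = x + (d * h x u) • u := by
    intro d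
    refine ⟨{ toFun := fun x => x + (d * h x u) • u
              map_add' := ?_
              map_smul' := ?_ }, fun x => rfl⟩
    · intro x y
      simp only [map_add, LinearMap.add_apply, mul_add, add_smul]
      abel
    · intro a x
      simp only [map_smul, LinearMap.smul_apply, smul_eq_mul, RingHom.id_apply,
        smul_add, smul_smul]
      ring_nf
  obtain ⟨f, hf⟩ := hlin c
  obtain ⟨g, hg⟩ := hlin (-c)
  have hval : ∀ (d : E) x, h (x + (d * h x u) • u) u = h x u := by
    intro d x
    simp [map_add, hu]
  have hfg : ∀ x, f (g x) = x := by
    intro x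
    rw [hg, hf, hval]
    rw [neg_mul, neg_smul]
    abel
  have hgf : ∀ x, g (f x) = x := by
    intro x
    rw [hf, hg, hval]
    rw [neg_mul, neg_smul]
    abel
  let T : V ≃ₗ[E] V := LinearEquiv.ofLinear f g (by ext x; simp [hfg x]) (by ext x; simp [hgf x])
  have hT : ∀ x, T x = x + (c * h x u) • u := fun x => hf x
  have hTiso : ∀ x y : V, h (T x) (T y) = h x y := by
    intro x y
    rw [hT, hT]
    simp only [map_add, LinearMap.add_apply, map_smul, LinearMap.smul_apply, smul_eq_mul,
      map_smulₛₗ, starRingEnd_apply, star_mul]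
    have h1 : h u y = star (h y u) := hherm u y
    rw [hu, h1, hcs]
    ring
  have hTH : T ∈ H := htrans T c hT hTiso
  have hTw : T w ∈ W := hWinv T hTH w hwW
  rw [hT] at hTw
  have : (c * h w u) • u ∈ W := by
    have := W.sub_mem hTw hwW
    simpa using this
  have hne : c * h w u ≠ 0 := by
    refine mul_ne_zero hc0 ?_
    rw [hherm w u]
    simpa using hw
  left
  have := W.smul_mem (c * h w u)⁻¹ this
  rwa [smul_smul, inv_mul_cancel₀ hne, one_smul] at this
end
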